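/- Let N ≥ 1, let ζ₁, …, ζ_N ∈ ℂ be pairwise distinct with Im ζⱼ > 0 for all j, and let v₁, …, v_N ∈ ℂ² be nonzero column vectors. Define the N×N complex matrix M by M_{jk} = (vⱼ†·v_k)/(conj(ζⱼ) − ζ_k), and assume M is invertible. Then for every ζ ∈ ℂ with ζ ∉ {ζ₁,…,ζ_N} ∪ {conj(ζ₁),…,conj(ζ_N)}, the 2×2 matrices Γ(ζ) = I + Σ_{j,k=1}^N (vⱼ·(M⁻¹)_{jk}·v_k†)/(ζ − conj(ζ_k)) and Γ̂(ζ) = I − Σ_{j,k=1}^N (vⱼ·(M⁻¹)_{jk}·v_k†)/(ζ − ζⱼ) satisfy Γ(ζ)·Γ̂(ζ) = I. -/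

import Mathlib

open Matrix Finset

private lemma vmv_mul {n : ℕ} (u w x y : Fin n → ℂ) :
    Matrix.vecMulVec u w * Matrix.vecMulVec x y = (w ⬝ᵥ x) • Matrix.vecMulVec u y := by
  ext i j
  simp [Matrix.mul_apply, Matrix.vecMulVec_apply, dotProduct, Finset.sum_mul, Finset.mul_sum]
  exact Finset.sum_congr rfl fun p _ => by ring

private lemma partial_frac (a b m zq zp : ℂ) (h1 : zq ≠ 0) (h2 : zp ≠ 0) :
    a / zq * (b / zp) * (m * (zp - zq)) = a * m * b / zq - a * m * b / zp := by
  field_simp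



/-- The soliton dressing matrix `Γ(ζ) = I + Σ |vⱼ⟩(M⁻¹)ⱼₖ⟨vₖ| / (ζ - ζₖ*)` with simple
zeros `ζ₁,…,ζ_N` in the upper half plane has inverse
`Γ̂(ζ) = I - Σ |vⱼ⟩(M⁻¹)ⱼₖ⟨vₖ| / (ζ - ζⱼ)`. -/
theorem soliton_matrix_inverse
    (N : ℕ) (hN : 1 ≤ N)
    (ζ : Fin N → ℂ) (hdist : Function.Injective ζ)
    (hIm : ∀ j, 0 < (ζ j).im)
    (v : Fin N → (Fin 2 → ℂ)) (hv : ∀ j, v j ≠ 0)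
    (M : Matrix (Fin N) (Fin N) ℂ)
    (hM : ∀ j k, M j k = (star (v j) ⬝ᵥ v k) / ((starRingEnd ℂ) (ζ j) - ζ k))
    (hMinv : IsUnit M.det)
    (z : ℂ) (hz : ∀ k, z ≠ ζ k ∧ z ≠ (starRingEnd ℂ) (ζ k)) :
    (1 + ∑ j : Fin N, ∑ k : Fin N,
        (M⁻¹ j k / (z - (starRingEnd ℂ) (ζ k))) • Matrix.vecMulVec (v j) (star (v k)))
      * (1 - ∑ j : Fin N, ∑ k : Fin N,
        (M⁻¹ j k / (z - ζ j)) • Matrix.vecMulVec (v j) (star (v k))) = 1 := by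
  have hcM : M⁻¹ * M = 1 := Matrix.nonsing_inv_mul M hMinv
  have hMc : M * M⁻¹ = 1 := Matrix.mul_nonsing_inv M hMinv
  have hz1 : ∀ k, z - ζ k ≠ 0 := fun k => sub_ne_zero.2 (hz k).1
  have hz2 : ∀ k, z - (starRingEnd ℂ) (ζ k) ≠ 0 := fun k => sub_ne_zero.2 (hz k).2
  have hzz : ∀ k l, (starRingEnd ℂ) (ζ k) - ζ l ≠ 0 := by
    intro k l h
    rw [sub_eq_zero] at h
    have him : ((starRingEnd ℂ) (ζ k)).im = (ζ l).im := by rw [h]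
    rw [Complex.conj_im] at him
    linarith [hIm k, hIm l]
  set P : Fin N → Fin N → Matrix (Fin 2) (Fin 2) ℂ :=
    fun j k => Matrix.vecMulVec (v j) (star (v k)) with hP
  set A : Matrix (Fin 2) (Fin 2) ℂ :=
    ∑ j : Fin N, ∑ k : Fin N, (M⁻¹ j k / (z - (starRingEnd ℂ) (ζ k))) • P j k with hA
  set B : Matrix (Fin 2) (Fin 2) ℂ :=
    ∑ j : Fin N, ∑ k : Fin N, (M⁻¹ j k / (z - ζ j)) • P j k with hB
  have hPP : ∀ j k l m, P j k * P l m = (star (v k) ⬝ᵥ v l) • P j m := by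
    intro j k l m; simp only [hP]; exact vmv_mul _ _ _ _
  have key : A * B = A - B := by
    have expand : A * B = ∑ j : Fin N, ∑ k : Fin N, ∑ l : Fin N, ∑ m : Fin N,
        ((M⁻¹ j k / (z - (starRingEnd ℂ) (ζ k))) * (M⁻¹ l m / (z - ζ l))
          * (star (v k) ⬝ᵥ v l)) • P j m := by
      rw [hA, hB, Finset.sum_mul]
      refine Finset.sum_congr rfl fun j _ => ?_
      rw [Finset.sum_mul]
      refine Finset.sum_congr rfl fun k _ => ?_
      rw [Finset.mul_sum]
      refine Finset.sum_congr rfl fun l _ => ?_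
      rw [Finset.mul_sum]
      refine Finset.sum_congr rfl fun m _ => ?_
      rw [Matrix.smul_mul, Matrix.mul_smul, hPP, smul_smul, smul_smul]
    have hscal : ∀ j k l m : Fin N,
        (M⁻¹ j k / (z - (starRingEnd ℂ) (ζ k))) * (M⁻¹ l m / (z - ζ l))
          * (star (v k) ⬝ᵥ v l)
        = M⁻¹ j k * M k l * M⁻¹ l m / (z - (starRingEnd ℂ) (ζ k))
          - M⁻¹ j k * M k l * M⁻¹ l m / (z - ζ l) := by
      intro j k l m
      have e : (starRingEnd ℂ) (ζ k) - ζ l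
          = (z - ζ l) - (z - (starRingEnd ℂ) (ζ k)) := by ring
      have hv' : star (v k) ⬝ᵥ v l
          = M k l * ((z - ζ l) - (z - (starRingEnd ℂ) (ζ k))) := by
        rw [hM k l, ← e, div_mul_cancel₀ _ (hzz k l)]
      rw [hv']
      exact partial_frac _ _ _ _ _ (hz2 k) (hz1 l)
    rw [expand]
    have split : (∑ j : Fin N, ∑ k : Fin N, ∑ l : Fin N, ∑ m : Fin N,
        ((M⁻¹ j k / (z - (starRingEnd ℂ) (ζ k))) * (M⁻¹ l m / (z - ζ l))
          * (star (v k) ⬝ᵥ v l)) • P j m)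
        = (∑ j : Fin N, ∑ k : Fin N, ∑ l : Fin N, ∑ m : Fin N,
            (M⁻¹ j k * M k l * M⁻¹ l m / (z - (starRingEnd ℂ) (ζ k))) • P j m)
          - (∑ j : Fin N, ∑ k : Fin N, ∑ l : Fin N, ∑ m : Fin N,
            (M⁻¹ j k * M k l * M⁻¹ l m / (z - ζ l)) • P j m) := by
      rw [← Finset.sum_sub_distrib]
      refine Finset.sum_congr rfl fun j _ => ?_
      rw [← Finset.sum_sub_distrib]
      refine Finset.sum_congr rfl fun k _ => ?_
      rw [← Finset.sum_sub_distrib]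
      refine Finset.sum_congr rfl fun l _ => ?_
      rw [← Finset.sum_sub_distrib]
      refine Finset.sum_congr rfl fun m _ => ?_
      rw [hscal, sub_smul]
    rw [split]
    have hS2 : (∑ j : Fin N, ∑ k : Fin N, ∑ l : Fin N, ∑ m : Fin N,
        (M⁻¹ j k * M k l * M⁻¹ l m / (z - ζ l)) • P j m) = B := by
      have step : ∀ j : Fin N, (∑ k : Fin N, ∑ l : Fin N, ∑ m : Fin N,
          (M⁻¹ j k * M k l * M⁻¹ l m / (z - ζ l)) • P j m)
          = ∑ l : Fin N, ∑ m : Fin N,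
            (((M⁻¹ * M) j l) * (M⁻¹ l m / (z - ζ l))) • P j m := by
        intro j
        rw [Finset.sum_comm]
        refine Finset.sum_congr rfl fun l _ => ?_
        rw [Finset.sum_comm]
        refine Finset.sum_congr rfl fun m _ => ?_
        rw [← Finset.sum_smul, Matrix.mul_apply, Finset.sum_mul]
        congr 1
        exact Finset.sum_congr rfl fun k _ => by ring
      calc (∑ j : Fin N, ∑ k : Fin N, ∑ l : Fin N, ∑ m : Fin N,
          (M⁻¹ j k * M k l * M⁻¹ l m / (z - ζ l)) • P j m)
          = ∑ j : Fin N, ∑ l : Fin N, ∑ m : Fin N,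
            (((M⁻¹ * M) j l) * (M⁻¹ l m / (z - ζ l))) • P j m :=
            Finset.sum_congr rfl fun j _ => step j
        _ = B := by
            rw [hcM, hB]
            refine Finset.sum_congr rfl fun j _ => ?_
            simp [Matrix.one_apply, ite_mul, ite_smul, Finset.sum_ite_eq]
    have hS1 : (∑ j : Fin N, ∑ k : Fin N, ∑ l : Fin N, ∑ m : Fin N,
        (M⁻¹ j k * M k l * M⁻¹ l m / (z - (starRingEnd ℂ) (ζ k))) • P j m) = A := by
      have step : ∀ j k : Fin N, (∑ l : Fin N, ∑ m : Fin N,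
          (M⁻¹ j k * M k l * M⁻¹ l m / (z - (starRingEnd ℂ) (ζ k))) • P j m)
          = ∑ m : Fin N,
            (((M * M⁻¹) k m) * (M⁻¹ j k / (z - (starRingEnd ℂ) (ζ k)))) • P j m := by
        intro j k
        rw [Finset.sum_comm]
        refine Finset.sum_congr rfl fun m _ => ?_
        rw [← Finset.sum_smul, Matrix.mul_apply, Finset.sum_mul]
        congr 1
        exact Finset.sum_congr rfl fun l _ => by ring
      calc (∑ j : Fin N, ∑ k : Fin N, ∑ l : Fin N, ∑ m : Fin N,
          (M⁻¹ j k * M k l * M⁻¹ l m / (z - (starRingEnd ℂ) (ζ k))) • P j m)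
          = ∑ j : Fin N, ∑ k : Fin N, ∑ m : Fin N,
            (((M * M⁻¹) k m) * (M⁻¹ j k / (z - (starRingEnd ℂ) (ζ k)))) • P j m :=
            Finset.sum_congr rfl fun j _ => Finset.sum_congr rfl fun k _ => step j k
        _ = A := by
            rw [hMc, hA]
            refine Finset.sum_congr rfl fun j _ => ?_
            refine Finset.sum_congr rfl fun k _ => ?_
            simp [Matrix.one_apply, ite_mul, ite_smul, Finset.sum_ite_eq]
    rw [hS1, hS2]
  rw [add_mul, one_mul, mul_sub, mul_one, key]
  abel
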